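/- Conformal factorization of the spherical kernel through the Cayley transform: for all u = (z,t) and v = (z',t') in ℂⁿ × ℝ, writing u⁻¹v = (z'−z, t'−t−2 Im⟨z,z'⟩), one has | 1 − ⟨𝒞(u), 𝒞(v)⟩ | = 2 · N(u⁻¹v)² · ((1+|z|²)² + t²)^{−1/2} · ((1+|z'|²)² + t'²)^{−1/2}, where ⟨ζ,η⟩ = ∑_{j=1}^{n+1} ζⱼ·conj(ηⱼ) for ζ, η ∈ ℂ^{n+1}. -/

import Mathlib

open Complex

noncomputable section

/-- Squared Euclidean norm `|z|²` of `z ∈ ℂⁿ`. -/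
def znormSq {n : ℕ} (z : Fin n → ℂ) : ℝ := ∑ j, Complex.normSq (z j)

/-- Group law of the Heisenberg group `ℍⁿ = ℂⁿ × ℝ`:
`(z,t)·(z',t') = (z+z', t+t'+2 Im⟨z,z'⟩)`. -/
def heisMul {n : ℕ} (u v : (Fin n → ℂ) × ℝ) : (Fin n → ℂ) × ℝ :=
  (u.1 + v.1, u.2 + v.2 + 2 * (∑ j, u.1 j * (starRingEnd ℂ) (v.1 j)).im)

/-- Group inverse on the Heisenberg group: `(z,t)⁻¹ = (−z,−t)`. -/
def heisInv {n : ℕ} (u : (Fin n → ℂ) × ℝ) : (Fin n → ℂ) × ℝ := (-u.1, -u.2)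

/-- Homogeneous norm `N(z,t) = (|z|⁴ + t²)^{1/4}`. -/
def heisNorm {n : ℕ} (u : (Fin n → ℂ) × ℝ) : ℝ :=
  (znormSq u.1 ^ 2 + u.2 ^ 2) ^ ((1 : ℝ) / 4)

/-- The Cayley transform `𝒞 : ℂⁿ × ℝ → ℂ^{n+1}`,
`𝒞(z,t) = ( 2z/(1+|z|²−it), (1−|z|²+it)/(1+|z|²−it) )`. -/
def cayley {n : ℕ} (u : (Fin n → ℂ) × ℝ) : Fin (n + 1) → ℂ :=
  Fin.snoc (fun j => 2 * u.1 j / (1 + (znormSq u.1 : ℂ) - u.2 * Complex.I))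
    ((1 - (znormSq u.1 : ℂ) + u.2 * Complex.I) / (1 + (znormSq u.1 : ℂ) - u.2 * Complex.I))

/-- **Conformal factorization of the spherical kernel through the Cayley transform:**
for all `u = (z,t)`, `v = (z',t')` in `ℂⁿ × ℝ`,
`|1 − ⟨𝒞(u), 𝒞(v)⟩| = 2 N(u⁻¹v)² ((1+|z|²)²+t²)^{−1/2} ((1+|z'|²)²+t'²)^{−1/2}`. -/
theorem cayley_kernel_factorization (n : ℕ) (hn : 1 ≤ n)
    (z z' : Fin n → ℂ) (t t' : ℝ) :
    ‖1 - ∑ j, cayley (z, t) j * (starRingEnd ℂ) (cayley (z', t') j)‖ =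
      2 * heisNorm (heisMul (heisInv (z, t)) (z', t')) ^ 2 *
        ((1 + znormSq z) ^ 2 + t ^ 2) ^ (-(1 / 2) : ℝ) *
        ((1 + znormSq z') ^ 2 + t' ^ 2) ^ (-(1 / 2) : ℝ) := by
  set a := znormSq z with ha
  set b := znormSq z' with hb
  have ha0 : 0 ≤ a := Finset.sum_nonneg fun j _ => Complex.normSq_nonneg _
  have hb0 : 0 ≤ b := Finset.sum_nonneg fun j _ => Complex.normSq_nonneg _
  set P : ℂ := ∑ j, z j * (starRingEnd ℂ) (z' j) with hP
  set τ : ℝ := t' - t - 2 * P.im with hτ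
  set d : ℝ := znormSq (-z + z') with hd
  have hd0 : 0 ≤ d := Finset.sum_nonneg fun j _ => Complex.normSq_nonneg _
  -- the point u⁻¹ v
  have hval : heisMul (heisInv ((z, t) : (Fin n → ℂ) × ℝ)) ((z', t') : (Fin n → ℂ) × ℝ)
      = ((-z + z', τ) : (Fin n → ℂ) × ℝ) := by
    simp only [heisMul, heisInv, hτ, hP]
    refine Prod.ext rfl ?_
    simp only [Pi.neg_apply, neg_mul, Finset.sum_neg_distrib, Complex.neg_im]
    ring
  -- nonvanishing denominators
  have hw : (1 : ℂ) + (a : ℂ) - (t : ℝ) * Complex.I ≠ 0 := by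
    intro h
    have := congrArg Complex.re h
    simp at this
    linarith
  have hw' : (1 : ℂ) + (b : ℂ) + (t' : ℝ) * Complex.I ≠ 0 := by
    intro h
    have := congrArg Complex.re h
    simp at this
    linarith
  -- key complex identity for the numerator
  have hC : ((d : ℂ) + (τ : ℝ) * Complex.I)
      = (a : ℂ) + (b : ℂ) - 2 * P + ((t' : ℝ) - (t : ℝ)) * Complex.I := by
    have hre : d = a + b - 2 * P.re := by
      rw [hd, ha, hb, hP, Complex.re_sum]
      rw [znormSq, znormSq, znormSq, ← Finset.sum_add_distrib, Finset.mul_sum,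
        ← Finset.sum_sub_distrib]
      refine Finset.sum_congr rfl fun j _ => ?_
      simp [Complex.normSq_apply, Complex.mul_re]
      ring
    apply Complex.ext
    · simp [hre]
    · simp [hτ]
      ring
  -- the kernel computation
  have hS : (1 : ℂ) - ∑ j, cayley (z, t) j * (starRingEnd ℂ) (cayley (z', t') j)
      = 2 * ((d : ℂ) + (τ : ℝ) * Complex.I) /
        (((1 : ℂ) + (a : ℂ) - (t : ℝ) * Complex.I) * ((1 : ℂ) + (b : ℂ) + (t' : ℝ) * Complex.I)) := by
    have hD : ((1 : ℂ) + (a : ℂ) - (t : ℝ) * Complex.I) * ((1 : ℂ) + (b : ℂ) + (t' : ℝ) * Complex.I)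
        ≠ 0 := mul_ne_zero hw hw'
    have hsum4 : (∑ j, 2 * z j * (2 * (starRingEnd ℂ) (z' j))) = 4 * P := by
      rw [hP, Finset.mul_sum]
      exact Finset.sum_congr rfl fun j _ => by ring
    rw [hC, Fin.sum_univ_castSucc]
    simp only [cayley, Fin.snoc_castSucc, Fin.snoc_last, map_div₀, map_mul, map_add, map_sub,
      map_one, map_ofNat, Complex.conj_ofReal, Complex.conj_I, ← ha, ← hb, mul_neg, neg_neg,
      sub_neg_eq_add]
    simp only [div_mul_div_comm, ← Finset.sum_div]
    rw [← add_div, eq_div_iff hD, sub_mul, one_mul, div_mul_cancel₀ _ hD, hsum4]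
    ring
  rw [hS, hval]
  rw [norm_div, norm_mul, norm_mul]
  have habsC : ‖(d : ℂ) + (τ : ℝ) * Complex.I‖ = Real.sqrt (d ^ 2 + τ ^ 2) := by
    rw [Complex.norm_def]
    congr 1
    simp [Complex.normSq_apply]
    ring
  have habsw : ‖(1 : ℂ) + (a : ℂ) - (t : ℝ) * Complex.I‖
      = Real.sqrt ((1 + a) ^ 2 + t ^ 2) := by
    rw [Complex.norm_def]
    congr 1
    simp [Complex.normSq_apply]
    ring
  have habsw' : ‖(1 : ℂ) + (b : ℂ) + (t' : ℝ) * Complex.I‖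
      = Real.sqrt ((1 + b) ^ 2 + t' ^ 2) := by
    rw [Complex.norm_def]
    congr 1
    simp [Complex.normSq_apply]
    ring
  have hN : heisNorm ((-z + z', τ) : (Fin n → ℂ) × ℝ) ^ 2 = Real.sqrt (d ^ 2 + τ ^ 2) := by
    rw [heisNorm, ← hd]
    rw [← Real.rpow_natCast ((d ^ 2 + τ ^ 2) ^ ((1 : ℝ) / 4)) 2,
      ← Real.rpow_mul (by positivity), Real.sqrt_eq_rpow]
    norm_num
  rw [habsC, habsw, habsw', hN, Complex.norm_two]
  have h1 : (0 : ℝ) < (1 + a) ^ 2 + t ^ 2 := by positivity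
  have h2 : (0 : ℝ) < (1 + b) ^ 2 + t' ^ 2 := by positivity
  rw [Real.rpow_neg h1.le, Real.rpow_neg h2.le, ← Real.sqrt_eq_rpow, ← Real.sqrt_eq_rpow]
  have hs1 : Real.sqrt ((1 + a) ^ 2 + t ^ 2) ≠ 0 := by positivity
  have hs2 : Real.sqrt ((1 + b) ^ 2 + t' ^ 2) ≠ 0 := by positivity
  field_simp
end
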